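/- arXiv:1501.06630 — 3 statements merged into one kernel-verified Lean document; each statement's English description precedes it below -/
import Mathlib

section
/- Let ξ ~ N(π, σ²) with π > 0 and σ > 0, and define τ̂(ξ) = (1/σ)·(1 − Φ(ξ/σ))/φ(ξ/σ), where Φ and φ are the standard normal CDF and PDF. Then E[τ̂(ξ)] = 1/π. -/
open MeasureTheory ProbabilityTheory Filter Topology

/-- Standard normal density `φ`. -/
noncomputable def stdPDF (x : ℝ) : ℝ :=
  (Real.sqrt (2 * Real.pi))⁻¹ * Real.exp (-(x ^ 2) / 2)

/-- Standard normal CDF `Φ`. -/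
noncomputable def stdCDF (x : ℝ) : ℝ := ∫ t in Set.Iic x, stdPDF t

lemma stdPDF_eq : stdPDF = gaussianPDFReal 0 1 := by
  ext x
  simp [stdPDF, gaussianPDFReal]

lemma stdPDF_pos (x : ℝ) : 0 < stdPDF x := by
  rw [stdPDF_eq]; exact gaussianPDFReal_pos _ _ _ one_ne_zero

lemma stdPDF_cont : Continuous stdPDF := by
  unfold stdPDF; fun_prop

lemma integrable_stdPDF : Integrable stdPDF := by
  rw [stdPDF_eq]; exact integrable_gaussianPDFReal 0 1

lemma integral_stdPDF : ∫ x, stdPDF x = 1 := by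
  rw [stdPDF_eq]; exact integral_gaussianPDFReal_eq_one 0 one_ne_zero

lemma stdCDF_eq (x : ℝ) : stdCDF x = stdCDF 0 + ∫ t in (0:ℝ)..x, stdPDF t := by
  rw [← intervalIntegral.integral_Iic_sub_Iic integrable_stdPDF.integrableOn
    integrable_stdPDF.integrableOn]
  unfold stdCDF; ring

lemma hasDerivAt_stdCDF (y : ℝ) : HasDerivAt stdCDF (stdPDF y) y := by
  have : stdCDF = fun x => stdCDF 0 + ∫ t in (0:ℝ)..x, stdPDF t := funext stdCDF_eq
  rw [this]
  exact ((stdPDF_cont.integral_hasStrictDerivAt 0 y).hasDerivAt).const_add _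

lemma continuous_stdCDF : Continuous stdCDF :=
  continuous_iff_continuousAt.2 fun x => (hasDerivAt_stdCDF x).continuousAt

lemma stdCDF_nonneg (x : ℝ) : 0 ≤ stdCDF x :=
  setIntegral_nonneg measurableSet_Iic fun t _ => (stdPDF_pos t).le

lemma stdCDF_le_one (x : ℝ) : stdCDF x ≤ 1 := by
  rw [← integral_stdPDF]
  exact setIntegral_le_integral integrable_stdPDF (ae_of_all _ fun t => (stdPDF_pos t).le)

lemma one_sub_stdCDF (y : ℝ) : 1 - stdCDF y = ∫ t in Set.Ioi y, stdPDF t := by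
  have h := intervalIntegral.integral_Iic_add_Ioi (b := y) integrable_stdPDF.integrableOn
    integrable_stdPDF.integrableOn
  rw [integral_stdPDF] at h
  rw [← h]; unfold stdCDF; ring

lemma tendsto_Iic_integral_atBot {f : ℝ → ℝ} (hf : Integrable f) :
    Tendsto (fun a => ∫ t in Set.Iic a, f t) atBot (𝓝 0) := by
  have h1 : Tendsto (fun a : ℝ => ∫ t in a..(0:ℝ), f t) atBot
      (𝓝 (∫ t in Set.Iic (0:ℝ), f t)) :=
    intervalIntegral_tendsto_integral_Iic 0 hf.integrableOn tendsto_id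
  have h2 : (fun a => ∫ t in Set.Iic a, f t)
      = fun a => (∫ t in Set.Iic (0:ℝ), f t) - ∫ t in a..(0:ℝ), f t := by
    ext a
    rw [← intervalIntegral.integral_Iic_sub_Iic hf.integrableOn hf.integrableOn]
    ring
  rw [h2]
  simpa using (tendsto_const_nhds (x := ∫ t in Set.Iic (0:ℝ), f t)).sub h1

lemma tendsto_Iic_integral_atTop {f : ℝ → ℝ} (hf : Integrable f) :
    Tendsto (fun a => ∫ t in Set.Iic a, f t) atTop (𝓝 (∫ t, f t)) := by
  have h1 : Tendsto (fun a : ℝ => ∫ t in (0:ℝ)..a, f t) atTop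
      (𝓝 (∫ t in Set.Ioi (0:ℝ), f t)) :=
    intervalIntegral_tendsto_integral_Ioi 0 hf.integrableOn tendsto_id
  have h2 : (fun a => ∫ t in Set.Iic a, f t)
      = fun a => (∫ t in Set.Iic (0:ℝ), f t) + ∫ t in (0:ℝ)..a, f t := by
    ext a
    rw [← intervalIntegral.integral_Iic_sub_Iic hf.integrableOn hf.integrableOn]
    ring
  rw [h2, ← intervalIntegral.integral_Iic_add_Ioi (b := (0:ℝ)) hf.integrableOn hf.integrableOn]
  exact (tendsto_const_nhds (x := ∫ t in Set.Iic (0:ℝ), f t)).add h1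

lemma tendsto_Ioi_integral_atTop {f : ℝ → ℝ} (hf : Integrable f) :
    Tendsto (fun a => ∫ t in Set.Ioi a, f t) atTop (𝓝 0) := by
  have h2 : (fun a => ∫ t in Set.Ioi a, f t)
      = fun a => (∫ t, f t) - ∫ t in Set.Iic a, f t := by
    ext a
    rw [← intervalIntegral.integral_Iic_add_Ioi (b := a) hf.integrableOn hf.integrableOn]
    ring
  rw [h2]
  simpa using (tendsto_const_nhds (x := ∫ t, f t)).sub (tendsto_Iic_integral_atTop hf)

lemma tendsto_stdCDF_atBot : Tendsto stdCDF atBot (𝓝 0) :=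
  tendsto_Iic_integral_atBot integrable_stdPDF

lemma tendsto_stdCDF_atTop : Tendsto stdCDF atTop (𝓝 1) := by
  have := tendsto_Iic_integral_atTop integrable_stdPDF
  rwa [integral_stdPDF] at this

lemma expo_id {σ : ℝ} (hσ : 0 < σ) (p t : ℝ) :
    stdPDF t * Real.exp (p / σ * t - p ^ 2 / (2 * σ ^ 2)) = stdPDF (t - p / σ) := by
  unfold stdPDF
  rw [mul_assoc, ← Real.exp_add]
  congr 1
  field_simp
  ring

lemma gauss_eq {σ : ℝ} (hσ : 0 < σ) (p x : ℝ) :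
    gaussianPDFReal p ⟨σ ^ 2, sq_nonneg σ⟩ x = (1 / σ) * stdPDF ((x - p) / σ) := by
  unfold gaussianPDFReal stdPDF
  have h1 : Real.sqrt (2 * Real.pi * σ ^ 2) = Real.sqrt (2 * Real.pi) * σ := by
    rw [Real.sqrt_mul (by positivity), Real.sqrt_sq hσ.le]
  change (√(2 * Real.pi * σ ^ 2))⁻¹ * Real.exp (-(x - p) ^ 2 / (2 * σ ^ 2)) = _
  rw [h1]
  have h3 : -((x - p) / σ) ^ 2 / 2 = -(x - p) ^ 2 / (2 * σ ^ 2) := by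
    rw [div_pow]
    field_simp
  rw [h3]
  have : Real.sqrt (2 * Real.pi) > 0 := by positivity
  field_simp

noncomputable def Gfun (σ p x : ℝ) : ℝ :=
  (1 - stdCDF (x / σ)) * Real.exp (p / σ ^ 2 * x - p ^ 2 / (2 * σ ^ 2))

lemma expo_id' {σ : ℝ} (hσ : 0 < σ) (p x : ℝ) :
    stdPDF (x / σ) * Real.exp (p / σ ^ 2 * x - p ^ 2 / (2 * σ ^ 2))
      = stdPDF ((x - p) / σ) := by
  have h : p / σ ^ 2 * x = p / σ * (x / σ) := by field_simp
  rw [h, expo_id hσ, ← sub_div]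

lemma Gfun_nonneg {σ : ℝ} (p x : ℝ) : 0 ≤ Gfun σ p x :=
  mul_nonneg (by linarith [stdCDF_le_one (x / σ)]) (Real.exp_pos _).le

lemma continuous_Gfun (σ p : ℝ) : Continuous (Gfun σ p) := by
  exact (continuous_const.sub (continuous_stdCDF.comp (continuous_id.div_const σ))).mul
    (Real.continuous_exp.comp (by fun_prop))

lemma hasDerivAt_Gfun {σ : ℝ} (hσ : 0 < σ) (p x : ℝ) :
    HasDerivAt (Gfun σ p)
      (p / σ ^ 2 * Gfun σ p x - (1 / σ) * stdPDF ((x - p) / σ)) x := by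
  have hu : HasDerivAt (fun x => 1 - stdCDF (x / σ))
      (-(stdPDF (x / σ) * (1 / σ))) x := by
    have h1 : HasDerivAt (fun x : ℝ => x / σ) (1 / σ) x := by
      simpa using (hasDerivAt_id x).div_const σ
    exact ((hasDerivAt_stdCDF (x / σ)).comp x h1).const_sub 1
  have hv : HasDerivAt (fun x => Real.exp (p / σ ^ 2 * x - p ^ 2 / (2 * σ ^ 2)))
      (Real.exp (p / σ ^ 2 * x - p ^ 2 / (2 * σ ^ 2)) * (p / σ ^ 2)) x := by
    have h2 : HasDerivAt (fun x : ℝ => p / σ ^ 2 * x - p ^ 2 / (2 * σ ^ 2))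
        (p / σ ^ 2) x := by
      simpa using ((hasDerivAt_id x).const_mul (p / σ ^ 2)).sub_const (p ^ 2 / (2 * σ ^ 2))
    simpa using h2.exp
  have := hu.mul hv
  refine this.congr_deriv ?_
  rw [← expo_id' hσ p x]
  unfold Gfun
  ring

lemma Gfun_tendsto_atBot {σ : ℝ} (hσ : 0 < σ) {p : ℝ} (hp : 0 < p) :
    Tendsto (Gfun σ p) atBot (𝓝 0) := by
  have h1 : Tendsto (fun x : ℝ => x / σ) atBot atBot := tendsto_id.atBot_div_const hσ
  have h2 : Tendsto (fun x : ℝ => 1 - stdCDF (x / σ)) atBot (𝓝 1) := by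
    simpa using (tendsto_const_nhds (x := (1:ℝ))).sub (tendsto_stdCDF_atBot.comp h1)
  have h3 : Tendsto (fun x : ℝ => p / σ ^ 2 * x - p ^ 2 / (2 * σ ^ 2)) atBot atBot := by
    apply tendsto_atBot_add_const_right
    exact (tendsto_const_mul_atBot_of_pos (by positivity)).2 tendsto_id
  have h4 := Real.tendsto_exp_atBot.comp h3
  have h5 := h2.mul h4; rw [mul_zero] at h5; exact h5

lemma Gfun_le {σ : ℝ} (p x : ℝ) :
    Gfun σ p x ≤ Real.exp (p / σ ^ 2 * x - p ^ 2 / (2 * σ ^ 2)) := by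
  unfold Gfun
  nth_rewrite 2 [← one_mul (Real.exp _)]
  apply mul_le_mul_of_nonneg_right _ (Real.exp_pos _).le
  linarith [stdCDF_nonneg (x / σ)]

lemma Gfun_tendsto_atTop {σ : ℝ} (hσ : 0 < σ) {p : ℝ} (hp : 0 < p) :
    Tendsto (Gfun σ p) atTop (𝓝 0) := by
  have hint : Integrable (fun t => stdPDF (t - p / σ)) :=
    integrable_stdPDF.comp_sub_right (p / σ)
  apply squeeze_zero (fun x => Gfun_nonneg p x)
    (g := fun x => ∫ t in Set.Ioi (x / σ), stdPDF (t - p / σ))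
  · intro x
    have hG : Gfun σ p x = ∫ t in Set.Ioi (x / σ),
        stdPDF t * Real.exp (p / σ ^ 2 * x - p ^ 2 / (2 * σ ^ 2)) := by
      rw [integral_mul_const]
      unfold Gfun
      rw [one_sub_stdCDF]
    rw [hG]
    apply setIntegral_mono_on (integrable_stdPDF.mul_const _).integrableOn
      hint.integrableOn measurableSet_Ioi
    intro t ht
    rw [← expo_id hσ p t]
    apply mul_le_mul_of_nonneg_left _ (stdPDF_pos t).le
    apply Real.exp_le_exp.2
    have h5 : p / σ ^ 2 * x = p / σ * (x / σ) := by field_simp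
    rw [h5]
    have := le_of_lt (Set.mem_Ioi.mp ht)
    gcongr
  · exact (tendsto_Ioi_integral_atTop hint).comp (tendsto_id.atTop_div_const hσ)

lemma exp_integrableOn_Iic {σ p : ℝ} (hσ : 0 < σ) (hp : 0 < p) :
    IntegrableOn (fun x => Real.exp (p / σ ^ 2 * x - p ^ 2 / (2 * σ ^ 2)))
      (Set.Iic (0:ℝ)) := by
  have h0 : IntegrableOn (fun x => Real.exp (-(p / σ ^ 2) * x)) (Set.Ioi (0:ℝ)) :=
    exp_neg_integrableOn_Ioi 0 (by positivity)
  have h1 : Integrable ((Set.Ioi (0:ℝ)).indicator fun x => Real.exp (-(p / σ ^ 2) * x)) :=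
    (integrable_indicator_iff measurableSet_Ioi).2 h0
  have h2 := h1.comp_neg
  have h3 : (fun x : ℝ => (Set.Ioi (0:ℝ)).indicator
        (fun x => Real.exp (-(p / σ ^ 2) * x)) (-x))
      = (Set.Iio (0:ℝ)).indicator fun x => Real.exp (p / σ ^ 2 * x) := by
    ext x
    by_cases hx : x < 0
    · rw [Set.indicator_of_mem (by simpa using hx), Set.indicator_of_mem (by simpa using hx)]
      ring_nf
    · rw [Set.indicator_of_notMem (by simpa using hx),
        Set.indicator_of_notMem (by simpa using hx)]
  rw [h3] at h2
  have h4 : IntegrableOn (fun x => Real.exp (p / σ ^ 2 * x)) (Set.Iio (0:ℝ)) :=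
    (integrable_indicator_iff measurableSet_Iio).1 h2
  have h5 : IntegrableOn (fun x => Real.exp (p / σ ^ 2 * x)) (Set.Iic (0:ℝ)) :=
    (integrableOn_Iic_iff_integrableOn_Iio).2 h4
  have h6 := h5.mul_const (Real.exp (-(p ^ 2 / (2 * σ ^ 2))))
  apply IntegrableOn.congr_fun h6 _ measurableSet_Iic
  intro x _
  simp only [← Real.exp_add]
  ring_nf

/-- Mills-ratio estimator `τ̂(x, σ²) = (1/σ)(1 − Φ(x/σ))/φ(x/σ)`. -/
noncomputable def millsTau (σ x : ℝ) : ℝ :=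
  (1 / σ) * (1 - stdCDF (x / σ)) / stdPDF (x / σ)

/-- If ξ ~ N(π, σ²) with π > 0, σ > 0, then E[τ̂(ξ)] = 1/π. -/
theorem stmt0 (π σ : ℝ) (hπ : 0 < π) (hσ : 0 < σ) :
    ∫ x, millsTau σ x ∂(gaussianReal π ⟨σ ^ 2, sq_nonneg σ⟩) = 1 / π := by
  set v : NNReal := ⟨σ ^ 2, sq_nonneg σ⟩ with hv_def
  have hv : v ≠ 0 := by
    intro h
    have : σ ^ 2 = 0 := congrArg NNReal.toReal h
    nlinarith
  -- Step 1: write as a Lebesgue integral against the density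
  have step1 : ∫ x, millsTau σ x ∂(gaussianReal π v)
      = ∫ x, gaussianPDFReal π v x * millsTau σ x := by
    rw [gaussianReal_of_var_ne_zero _ hv]
    have hmeas : Measurable fun x => (gaussianPDFReal π v x).toNNReal :=
      (measurable_gaussianPDFReal π v).real_toNNReal
    have hd : gaussianPDF π v = fun x => ((gaussianPDFReal π v x).toNNReal : ENNReal) := rfl
    rw [hd, integral_withDensity_eq_integral_smul hmeas]
    congr 1
    ext x
    rw [NNReal.smul_def, Real.coe_toNNReal _ (gaussianPDFReal_nonneg π v x), smul_eq_mul]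
  -- Step 2: pointwise identity
  have key : ∀ x, gaussianPDFReal π v x * millsTau σ x = (1 / σ ^ 2) * Gfun σ π x := by
    intro x
    have hφ := (stdPDF_pos (x / σ)).ne'
    unfold millsTau Gfun
    rw [gauss_eq hσ, ← expo_id' hσ]
    field_simp
  rw [step1]
  simp_rw [key]
  -- The antiderivative
  set F : ℝ → ℝ := fun x => (1 / π) * (Gfun σ π x + stdCDF ((x - π) / σ)) with hF_def
  have hderiv : ∀ x, HasDerivAt F ((1 / σ ^ 2) * Gfun σ π x) x := by
    intro x
    have h1 : HasDerivAt (fun x : ℝ => (x - π) / σ) (1 / σ) x := by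
      simpa using ((hasDerivAt_id x).sub_const π).div_const σ
    have hN : HasDerivAt (fun x => stdCDF ((x - π) / σ))
        (stdPDF ((x - π) / σ) * (1 / σ)) x :=
      (hasDerivAt_stdCDF _).comp x h1
    have := ((hasDerivAt_Gfun hσ π x).add hN).const_mul (1 / π)
    refine this.congr_deriv ?_
    field_simp
    ring
  have htB : Tendsto (fun x : ℝ => (x - π) / σ) atBot atBot := by
    apply Tendsto.atBot_div_const hσ
    simpa [sub_eq_add_neg] using tendsto_atBot_add_const_right atBot (-π) tendsto_id
  have htT : Tendsto (fun x : ℝ => (x - π) / σ) atTop atTop := by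
    apply Tendsto.atTop_div_const hσ
    simpa [sub_eq_add_neg] using tendsto_atTop_add_const_right atTop (-π) tendsto_id
  have hFbot : Tendsto F atBot (𝓝 0) := by
    have := ((Gfun_tendsto_atBot hσ hπ).add (tendsto_stdCDF_atBot.comp htB)).const_mul (1 / π)
    rw [hF_def]
    simpa [one_div] using this
  have hFtop : Tendsto F atTop (𝓝 (1 / π)) := by
    have := ((Gfun_tendsto_atTop hσ hπ).add (tendsto_stdCDF_atTop.comp htT)).const_mul (1 / π)
    rw [hF_def, one_div]
    simpa [one_div] using this
  -- Integrability on Iic 0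
  have hint : IntegrableOn (fun x => (1 / σ ^ 2) * Gfun σ π x) (Set.Iic (0:ℝ)) := by
    apply Integrable.mono' (((exp_integrableOn_Iic hσ hπ).const_mul (1 / σ ^ 2)))
      ((continuous_const.mul (continuous_Gfun σ π)).aestronglyMeasurable.restrict)
    filter_upwards with x
    rw [Real.norm_eq_abs, Pi.mul_apply, abs_of_nonneg (mul_nonneg (by positivity) (Gfun_nonneg π x))]
    have := Gfun_le (σ := σ) π x
    have h2 : (0:ℝ) < 1 / σ ^ 2 := by positivity
    nlinarith [Gfun_nonneg (σ := σ) π x]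
  have hIic : ∫ x in Set.Iic (0:ℝ), (1 / σ ^ 2) * Gfun σ π x = F 0 - 0 :=
    integral_Iic_of_hasDerivAt_of_tendsto (hderiv 0).continuousAt.continuousWithinAt
      (fun x _ => hderiv x) hint hFbot
  have hIoi : ∫ x in Set.Ioi (0:ℝ), (1 / σ ^ 2) * Gfun σ π x = 1 / π - F 0 :=
    integral_Ioi_of_hasDerivAt_of_nonneg (hderiv 0).continuousAt.continuousWithinAt
      (fun x _ => hderiv x) (fun x _ => mul_nonneg (by positivity) (Gfun_nonneg π x)) hFtop
  have hint2 : IntegrableOn (fun x => (1 / σ ^ 2) * Gfun σ π x) (Set.Ioi (0:ℝ)) :=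
    integrableOn_Ioi_deriv_of_nonneg (hderiv 0).continuousAt.continuousWithinAt
      (fun x _ => hderiv x) (fun x _ => mul_nonneg (by positivity) (Gfun_nonneg π x)) hFtop
  rw [← intervalIntegral.integral_Iic_add_Ioi hint hint2, hIic, hIoi]
  ring
end

section
/- Let ξ ~ N(π, 1) with π > 0 and let τ̂(ξ) = (1 − Φ(ξ))/φ(ξ). There exists a constant C (independent of π) such that π·E[|π·τ̂(ξ) − 1|] ≤ C for all π > 0. -/
open MeasureTheory ProbabilityTheory Filter

namespace Stmt7Aux

open Real Set
open scoped ENNReal NNReal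

lemma stdPDF_eq (x : ℝ) : stdPDF x = gaussianPDFReal 0 1 x := by
  simp [stdPDF, gaussianPDFReal]

lemma stdPDF_pos (x : ℝ) : 0 < stdPDF x := by
  have h : (0:ℝ) < Real.sqrt (2 * Real.pi) := Real.sqrt_pos.2 (by positivity)
  exact mul_pos (inv_pos.2 h) (Real.exp_pos _)

lemma stdPDF_le (x : ℝ) : stdPDF x ≤ (Real.sqrt (2 * Real.pi))⁻¹ := by
  have h : (0:ℝ) < Real.sqrt (2 * Real.pi) := Real.sqrt_pos.2 (by positivity)
  have : Real.exp (-(x ^ 2) / 2) ≤ 1 := by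
    rw [Real.exp_le_one_iff]; nlinarith [sq_nonneg x]
  calc stdPDF x ≤ (Real.sqrt (2 * Real.pi))⁻¹ * 1 := by
        exact mul_le_mul_of_nonneg_left this (by positivity)
    _ = _ := mul_one _

lemma continuous_stdPDF : Continuous stdPDF := by
  unfold stdPDF; fun_prop

lemma hasDerivAt_stdPDF (x : ℝ) : HasDerivAt stdPDF (-x * stdPDF x) x := by
  have h1 : HasDerivAt (fun x : ℝ => -(x ^ 2) / 2) (-x) x := by
    have := ((hasDerivAt_pow 2 x).neg).div_const 2
    simpa using this.congr_deriv (by ring)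
  have h2 : HasDerivAt (fun x : ℝ => Real.exp (-(x ^ 2) / 2))
      (Real.exp (-(x ^ 2) / 2) * (-x)) x := h1.exp
  have := h2.const_mul ((Real.sqrt (2 * Real.pi))⁻¹)
  refine (this.congr_deriv ?_)
  unfold stdPDF; ring

lemma integrable_stdPDF : Integrable stdPDF := by
  have := integrable_gaussianPDFReal 0 1
  exact this.congr (Filter.Eventually.of_forall fun x => (stdPDF_eq x).symm)

lemma integral_stdPDF : ∫ x, stdPDF x = 1 := by
  rw [show stdPDF = gaussianPDFReal 0 1 from funext stdPDF_eq]
  exact integral_gaussianPDFReal_eq_one 0 one_ne_zero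

lemma tendsto_stdPDF_atTop : Tendsto stdPDF atTop (nhds 0) := by
  have h : Tendsto (fun x : ℝ => -(x ^ 2) / 2) atTop atBot := by
    apply Tendsto.atBot_div_const two_pos
    exact tendsto_neg_atTop_atBot.comp (tendsto_pow_atTop two_ne_zero)
  have h2 := (Real.tendsto_exp_atBot).comp h
  have h3 := h2.const_mul ((Real.sqrt (2 * Real.pi))⁻¹)
  rw [mul_zero] at h3
  exact h3.congr fun x => by simp [stdPDF, Function.comp]

lemma tendsto_stdPDF_atBot : Tendsto stdPDF atBot (nhds 0) := by
  have h0 : Tendsto (fun x : ℝ => x ^ 2) atBot atTop := by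
    have e : Tendsto (fun x : ℝ => x ^ 2) atTop atTop := tendsto_pow_atTop two_ne_zero
    have a : Tendsto (abs : ℝ → ℝ) atBot atTop := tendsto_abs_atBot_atTop
    exact (e.comp a).congr fun x => by simp [Function.comp, sq_abs]
  have h : Tendsto (fun x : ℝ => -(x ^ 2) / 2) atBot atBot := by
    apply Tendsto.atBot_div_const two_pos
    exact Tendsto.comp tendsto_neg_atTop_atBot h0
  have h2 := (Real.tendsto_exp_atBot).comp h
  have h3 := h2.const_mul ((Real.sqrt (2 * Real.pi))⁻¹)
  rw [mul_zero] at h3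
  exact h3.congr fun x => by simp [stdPDF, Function.comp]

lemma integrable_mul_stdPDF : Integrable (fun t : ℝ => t * stdPDF t) := by
  have hint : Integrable (fun t : ℝ => (Real.sqrt (2 * Real.pi))⁻¹ *
      Real.exp (-(1/4) * t ^ 2)) :=
    (integrable_exp_neg_mul_sq (by norm_num)).const_mul _
  refine hint.mono' ?_ ?_
  · exact (continuous_id.mul continuous_stdPDF).aestronglyMeasurable
  · refine Filter.Eventually.of_forall fun t => ?_
    have habs : |t| ≤ Real.exp (t ^ 2 / 4) := by
      have h1 : |t| ≤ 1 + t ^ 2 / 4 := by nlinarith [sq_abs t, sq_nonneg (|t| - 2)]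
      have h2 : 1 + t ^ 2 / 4 ≤ Real.exp (t ^ 2 / 4) := by
        have := Real.add_one_le_exp (t ^ 2 / 4); linarith
      linarith
    have h : (0:ℝ) < Real.sqrt (2 * Real.pi) := Real.sqrt_pos.2 (by positivity)
    rw [Real.norm_eq_abs, abs_mul, abs_of_pos (stdPDF_pos t)]
    unfold stdPDF
    rw [← mul_assoc, mul_comm |t| _, mul_assoc]
    refine mul_le_mul_of_nonneg_left ?_ (by positivity)
    calc |t| * Real.exp (-(t ^ 2) / 2)
        ≤ Real.exp (t ^ 2 / 4) * Real.exp (-(t ^ 2) / 2) :=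
          mul_le_mul_of_nonneg_right habs (Real.exp_pos _).le
      _ = Real.exp (-(1/4) * t ^ 2) := by rw [← Real.exp_add]; ring_nf

lemma integral_Ioi_mul_stdPDF (x : ℝ) : ∫ t in Ioi x, t * stdPDF t = stdPDF x := by
  have h := integral_Ioi_of_hasDerivAt_of_tendsto'
    (f := fun t : ℝ => -stdPDF t) (f' := fun t : ℝ => t * stdPDF t) (a := x)
    (fun t _ => by exact ((hasDerivAt_stdPDF t).neg).congr_deriv (by ring))
    (integrable_mul_stdPDF.integrableOn)
    (by simpa using tendsto_stdPDF_atTop.neg)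
  simpa using h

lemma integral_Iic_neg_mul_stdPDF (x : ℝ) : ∫ t in Iic x, -t * stdPDF t = stdPDF x := by
  have h := integral_Iic_of_hasDerivAt_of_tendsto'
    (f := stdPDF) (f' := fun t : ℝ => -t * stdPDF t) (a := x)
    (fun t _ => hasDerivAt_stdPDF t)
    ((integrable_mul_stdPDF.neg.congr (Filter.Eventually.of_forall fun t => by
      simp only [Pi.neg_apply]; ring)).integrableOn)
    tendsto_stdPDF_atBot
  simpa using h

lemma stdCDF_nonneg (x : ℝ) : 0 ≤ stdCDF x :=
  setIntegral_nonneg measurableSet_Iic fun t _ => (stdPDF_pos t).le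

lemma stdCDF_le_one (x : ℝ) : stdCDF x ≤ 1 := by
  rw [← integral_stdPDF]
  exact setIntegral_le_integral integrable_stdPDF
    (Filter.Eventually.of_forall fun t => (stdPDF_pos t).le)

lemma one_sub_stdCDF (x : ℝ) : 1 - stdCDF x = ∫ t in Ioi x, stdPDF t := by
  have h := intervalIntegral.integral_Iic_add_Ioi (b := x) (integrable_stdPDF.integrableOn)
    (integrable_stdPDF.integrableOn)
  rw [integral_stdPDF] at h
  unfold stdCDF
  linarith

lemma mills_atTop {x : ℝ} (hx : 1 ≤ x) : 1 - stdCDF x ≤ stdPDF x := by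
  rw [one_sub_stdCDF, ← integral_Ioi_mul_stdPDF x]
  refine setIntegral_mono_on (integrable_stdPDF.integrableOn)
    (integrable_mul_stdPDF.integrableOn) measurableSet_Ioi fun t ht => ?_
  have h1 : (1:ℝ) ≤ t := hx.trans (le_of_lt ht)
  nlinarith [stdPDF_pos t]

lemma stdCDF_le_pdf_atBot {x : ℝ} (hx : x ≤ -1) : stdCDF x ≤ stdPDF x := by
  rw [show stdCDF x = ∫ t in Iic x, stdPDF t from rfl, ← integral_Iic_neg_mul_stdPDF x]
  refine setIntegral_mono_on (integrable_stdPDF.integrableOn)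
    ((integrable_mul_stdPDF.neg.congr (Filter.Eventually.of_forall fun t => by
      simp only [Pi.neg_apply]; ring)).integrableOn) measurableSet_Iic fun t ht => ?_
  have h1 : t ≤ -1 := le_trans ht hx
  nlinarith [stdPDF_pos t]

lemma hasDerivAt_stdCDF (x : ℝ) : HasDerivAt stdCDF (stdPDF x) x := by
  have key : stdCDF = fun y : ℝ => stdCDF 0 + ∫ t in (0:ℝ)..y, stdPDF t := by
    funext y
    have h := intervalIntegral.integral_Iic_sub_Iic (μ := volume) (f := stdPDF)
      (a := (0:ℝ)) (b := y) (integrable_stdPDF.integrableOn) (integrable_stdPDF.integrableOn)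
    unfold stdCDF
    linarith
  rw [key]
  apply HasDerivAt.const_add
  exact intervalIntegral.integral_hasDerivAt_right
    (integrable_stdPDF.intervalIntegrable)
    (continuous_stdPDF.stronglyMeasurable.stronglyMeasurableAtFilter)
    continuous_stdPDF.continuousAt

lemma tendsto_one_sub_stdCDF_atTop : Tendsto (fun x => 1 - stdCDF x) atTop (nhds 0) := by
  refine tendsto_of_tendsto_of_tendsto_of_le_of_le' tendsto_const_nhds
    tendsto_stdPDF_atTop ?_ ?_
  · exact Filter.Eventually.of_forall fun x => by linarith [stdCDF_le_one x]
  · filter_upwards [eventually_ge_atTop (1:ℝ)] with x hx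
    exact mills_atTop hx

lemma tendsto_stdCDF_atTop : Tendsto stdCDF atTop (nhds 1) := by
  have h := tendsto_one_sub_stdCDF_atTop.const_sub (1:ℝ)
  simp only [sub_zero] at h
  exact h.congr fun x => by ring

lemma tendsto_stdCDF_atBot : Tendsto stdCDF atBot (nhds 0) := by
  refine tendsto_of_tendsto_of_tendsto_of_le_of_le' tendsto_const_nhds
    tendsto_stdPDF_atBot ?_ ?_
  · exact Filter.Eventually.of_forall fun x => stdCDF_nonneg x
  · filter_upwards [eventually_le_atBot (-1:ℝ)] with x hx
    exact stdCDF_le_pdf_atBot hx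

lemma integrableOn_exp_mul_Iic {p : ℝ} (hp : 0 < p) (c : ℝ) :
    IntegrableOn (fun x : ℝ => Real.exp (p * x)) (Iic c) := by
  have h := exp_neg_integrableOn_Ioi (-c) hp
  have h2 : IntegrableOn (fun x : ℝ => Real.exp (p * x)) (Iio c) := by
    have h3 := ((Measure.measurePreserving_neg (volume : Measure ℝ)).integrableOn_comp_preimage
      (Homeomorph.neg ℝ).measurableEmbedding (f := fun x : ℝ => Real.exp (-p * x))
      (s := Ioi (-c))).2 h
    have : ((fun x : ℝ => Real.exp (-p * x)) ∘ (Neg.neg : ℝ → ℝ)) = fun x : ℝ => Real.exp (p * x) := by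
      funext x; simp [Function.comp]
    rw [this] at h3
    have hpre : (Neg.neg : ℝ → ℝ) ⁻¹' Ioi (-c) = Iio c := by
      ext y; simp
    rwa [hpre] at h3
  rwa [integrableOn_Iic_iff_integrableOn_Iio]

lemma gaussianPDFReal_eq (p x : ℝ) :
    gaussianPDFReal p 1 x = stdPDF x * Real.exp (p * x - p ^ 2 / 2) := by
  rw [gaussianPDFReal, stdPDF]
  push_cast
  rw [mul_one, mul_assoc, ← Real.exp_add]
  congr 1
  ring_nf

lemma main (p : ℝ) (hp : 0 < p) :
    p * ∫ x, |p * millsTau 1 x - 1| ∂(gaussianReal p 1) ≤ 1 := by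
  set c : ℝ := (Real.sqrt (2 * Real.pi))⁻¹ with hc
  set g : ℝ → ℝ := fun x => p * (1 - stdCDF x) - stdPDF x with hgdef
  set h : ℝ → ℝ := fun x => (1 - stdCDF x) * Real.exp (p * x) with hhdef
  set H : ℝ → ℝ := fun x => Real.exp (p * x) * g x with hHdef
  have hg_deriv : ∀ x, HasDerivAt g ((x - p) * stdPDF x) x := by
    intro x
    have h1 := (((hasDerivAt_stdCDF x).const_sub 1).const_mul p).sub (hasDerivAt_stdPDF x)
    refine h1.congr_deriv ?_
    ring
  have hexp_deriv : ∀ x : ℝ, HasDerivAt (fun y => Real.exp (p * y)) (p * Real.exp (p * x)) x := by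
    intro x
    have h1 : HasDerivAt (fun y : ℝ => p * y) p x := (hasDerivAt_id x).const_mul p |>.congr_deriv (by ring)
    exact (h1.exp).congr_deriv (by ring)
  have hh_deriv : ∀ x, HasDerivAt h (H x) x := by
    intro x
    have h1 := ((hasDerivAt_stdCDF x).const_sub 1).mul (hexp_deriv x)
    refine h1.congr_deriv ?_
    simp only [hHdef, hgdef]
    ring
  have hg_cont : Continuous g := by
    rw [continuous_iff_continuousAt]
    exact fun x => (hg_deriv x).continuousAt
  have hg_top : Tendsto g atTop (nhds 0) := by
    have h1 := (tendsto_one_sub_stdCDF_atTop.const_mul p).sub tendsto_stdPDF_atTop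
    simpa using h1
  have hg_bot : Tendsto g atBot (nhds p) := by
    have h0 : Tendsto (fun x => 1 - stdCDF x) atBot (nhds 1) := by
      have := tendsto_stdCDF_atBot.const_sub (1:ℝ)
      simpa using this
    have h1 := (h0.const_mul p).sub tendsto_stdPDF_atBot
    simpa using h1
  have hg_diff : DifferentiableOn ℝ g (interior (Iic p)) :=
    fun x _ => (hg_deriv x).differentiableAt.differentiableWithinAt
  have g_anti : AntitoneOn g (Iic p) := by
    refine antitoneOn_of_deriv_nonpos (convex_Iic p) hg_cont.continuousOn hg_diff ?_
    intro x hx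
    rw [interior_Iic, mem_Iio] at hx
    rw [(hg_deriv x).deriv]
    nlinarith [stdPDF_pos x]
  have g_mono : MonotoneOn g (Ici p) := by
    refine monotoneOn_of_deriv_nonneg (convex_Ici p) hg_cont.continuousOn
      (fun x _ => (hg_deriv x).differentiableAt.differentiableWithinAt) ?_
    intro x hx
    rw [interior_Ici, mem_Ioi] at hx
    rw [(hg_deriv x).deriv]
    nlinarith [stdPDF_pos x]
  have g_nonpos_Ici : ∀ x, p ≤ x → g x ≤ 0 := by
    intro x hx
    refine ge_of_tendsto hg_top ?_
    filter_upwards [eventually_ge_atTop x] with y hy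
    exact g_mono hx (hx.trans hy) hy
  obtain ⟨a, ha_pos, ha_le⟩ : ∃ a, 0 < g a ∧ a ≤ p := by
    have h1 : ∀ᶠ x in atBot, 0 < g x := hg_bot.eventually (eventually_gt_nhds hp)
    have h2 : ∀ᶠ x : ℝ in atBot, x ≤ p := eventually_le_atBot p
    exact (h1.and h2).exists
  obtain ⟨x₀, hx₀_mem, hx₀⟩ : ∃ x₀ ∈ Icc a p, g x₀ = 0 := by
    have h0 : (0:ℝ) ∈ Icc (g p) (g a) := ⟨g_nonpos_Ici p le_rfl, ha_pos.le⟩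
    exact intermediate_value_Icc' ha_le hg_cont.continuousOn h0
  have hx₀p : x₀ ≤ p := hx₀_mem.2
  have g_nonneg : ∀ x ∈ Iic x₀, 0 ≤ g x := by
    intro x hx
    have := g_anti (mem_Iic.2 ((mem_Iic.1 hx).trans hx₀p)) (mem_Iic.2 hx₀p) hx
    rw [hx₀] at this
    exact this
  have g_nonpos : ∀ x, x₀ ≤ x → g x ≤ 0 := by
    intro x hx
    rcases le_total x p with hxp | hxp
    · have := g_anti (mem_Iic.2 hx₀p) (mem_Iic.2 hxp) hx
      rw [hx₀] at this
      exact this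
    · exact g_nonpos_Ici x hxp
  have hexp_bot : Tendsto (fun x : ℝ => Real.exp (p * x)) atBot (nhds 0) := by
    apply Real.tendsto_exp_atBot.comp
    exact (tendsto_const_mul_atBot_of_pos hp).2 tendsto_id
  have hh_bot : Tendsto h atBot (nhds 0) := by
    refine tendsto_of_tendsto_of_tendsto_of_le_of_le' tendsto_const_nhds hexp_bot ?_ ?_
    · exact Filter.Eventually.of_forall fun x =>
        mul_nonneg (by linarith [stdCDF_le_one x]) (Real.exp_pos _).le
    · refine Filter.Eventually.of_forall fun x => ?_
      have h1 : 1 - stdCDF x ≤ 1 := by linarith [stdCDF_nonneg x]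
      calc (1 - stdCDF x) * Real.exp (p * x) ≤ 1 * Real.exp (p * x) :=
            mul_le_mul_of_nonneg_right h1 (Real.exp_pos _).le
        _ = Real.exp (p * x) := one_mul _
  have hmaj_top : Tendsto (fun x => stdPDF x * Real.exp (p * x)) atTop (nhds 0) := by
    have h1 : Tendsto (fun x : ℝ => x - p) atTop atTop := tendsto_atTop_add_const_right _ (-p) tendsto_id
    have h2 := (tendsto_stdPDF_atTop.comp h1).const_mul (Real.exp (p ^ 2 / 2))
    rw [mul_zero] at h2
    refine h2.congr fun x => ?_
    simp only [Function.comp]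
    rw [stdPDF, stdPDF, ← mul_assoc, mul_comm (Real.exp (p^2/2)), mul_assoc, ← Real.exp_add,
      mul_assoc, ← Real.exp_add]
    congr 2
    ring
  have hh_top : Tendsto h atTop (nhds 0) := by
    refine tendsto_of_tendsto_of_tendsto_of_le_of_le' tendsto_const_nhds hmaj_top ?_ ?_
    · exact Filter.Eventually.of_forall fun x =>
        mul_nonneg (by linarith [stdCDF_le_one x]) (Real.exp_pos _).le
    · filter_upwards [eventually_ge_atTop (1:ℝ)] with x hx
      exact mul_le_mul_of_nonneg_right (mills_atTop hx) (Real.exp_pos _).le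
  have hH_cont : Continuous H := (Real.continuous_exp.comp (continuous_const.mul continuous_id)).mul hg_cont
  have hH_int_Iic : IntegrableOn H (Iic x₀) := by
    refine Integrable.mono' ((integrableOn_exp_mul_Iic hp x₀).const_mul (p + c)) ?_ ?_
    · exact hH_cont.aestronglyMeasurable.restrict
    · refine Filter.Eventually.of_forall fun x => ?_
      have h1 := stdCDF_nonneg x
      have h2 := stdCDF_le_one x
      have h3 := stdPDF_pos x
      have h4 := stdPDF_le x
      have hb : |g x| ≤ p + c := by
        rw [abs_le]
        constructor
        · simp only [hgdef]; nlinarith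
        · simp only [hgdef]; nlinarith
      calc ‖H x‖ = Real.exp (p * x) * |g x| := by
            rw [Real.norm_eq_abs, hHdef]; simp only; rw [abs_mul, Real.abs_exp]
        _ ≤ Real.exp (p * x) * (p + c) :=
            mul_le_mul_of_nonneg_left hb (Real.exp_pos _).le
        _ = (p + c) * Real.exp (p * x) := mul_comm _ _
  have key_Ioi : ∫ x in Ioi x₀, H x = 0 - h x₀ :=
    integral_Ioi_of_hasDerivAt_of_nonpos' (fun x _ => hh_deriv x)
      (fun x hx => mul_nonpos_of_nonneg_of_nonpos (Real.exp_pos _).le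
        (g_nonpos x (le_of_lt hx))) hh_top
  have hH_int_Ioi : IntegrableOn H (Ioi x₀) :=
    integrableOn_Ioi_deriv_of_nonpos' (fun x _ => hh_deriv x)
      (fun x hx => mul_nonpos_of_nonneg_of_nonpos (Real.exp_pos _).le
        (g_nonpos x (le_of_lt hx))) hh_top
  have key_Iic : ∫ x in Iic x₀, H x = h x₀ - 0 :=
    integral_Iic_of_hasDerivAt_of_tendsto' (fun x _ => hh_deriv x) hH_int_Iic hh_bot
  have hH_int : Integrable fun x => |H x| := by
    have : IntegrableOn H univ := by
      rw [← Iic_union_Ioi (a := x₀)]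
      exact hH_int_Iic.union hH_int_Ioi
    rw [integrableOn_univ] at this
    exact this.abs
  have habs_Iic : ∫ x in Iic x₀, |H x| = h x₀ := by
    have he : ∫ x in Iic x₀, |H x| = ∫ x in Iic x₀, H x := by
      refine setIntegral_congr_fun measurableSet_Iic fun x hx => ?_
      exact abs_of_nonneg (mul_nonneg (Real.exp_pos _).le (g_nonneg x hx))
    rw [he, key_Iic, sub_zero]
  have habs_Ioi : ∫ x in Ioi x₀, |H x| = h x₀ := by
    have he : ∫ x in Ioi x₀, |H x| = ∫ x in Ioi x₀, -H x := by
      refine setIntegral_congr_fun measurableSet_Ioi fun x hx => ?_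
      exact abs_of_nonpos (mul_nonpos_of_nonneg_of_nonpos (Real.exp_pos _).le
        (g_nonpos x (le_of_lt hx)))
    rw [he, integral_neg, key_Ioi]
    ring
  have habs_total : ∫ x, |H x| = 2 * h x₀ := by
    rw [← intervalIntegral.integral_Iic_add_Ioi (b := x₀) hH_int.integrableOn
      hH_int.integrableOn, habs_Iic, habs_Ioi]
    ring
  -- rewrite the probability integral
  have hmeas : Measurable fun x => (gaussianPDFReal p 1 x).toNNReal :=
    (measurable_gaussianPDFReal p 1).real_toNNReal
  have hrw : (∫ x, |p * millsTau 1 x - 1| ∂(gaussianReal p 1))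
      = ∫ x, Real.exp (-(p ^ 2) / 2) * |H x| := by
    rw [gaussianReal_of_var_ne_zero p one_ne_zero]
    rw [show gaussianPDF p 1 = fun x => (((gaussianPDFReal p 1 x).toNNReal : ℝ≥0) : ℝ≥0∞) from rfl]
    rw [integral_withDensity_eq_integral_smul hmeas]
    congr 1
    funext x
    have hφ : stdPDF x ≠ 0 := (stdPDF_pos x).ne'
    have hmt : millsTau 1 x = (1 - stdCDF x) / stdPDF x := by
      rw [millsTau]
      simp [div_one]
    have hval : |p * millsTau 1 x - 1| = |g x| / stdPDF x := by
      rw [hmt, hgdef]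
      rw [show p * ((1 - stdCDF x) / stdPDF x) - 1 = (p * (1 - stdCDF x) - stdPDF x) / stdPDF x by
        field_simp]
      rw [abs_div, abs_of_pos (stdPDF_pos x)]
    rw [NNReal.smul_def, Real.coe_toNNReal _ (gaussianPDFReal_nonneg p 1 x)]
    rw [hval, gaussianPDFReal_eq, hHdef]
    simp only
    rw [abs_mul, Real.abs_exp]
    field_simp
    rw [smul_eq_mul, show p * (x * 2 - p) / 2 = -(p ^ 2 / 2) + p * x by ring, Real.exp_add,
      mul_div_assoc', div_eq_iff hφ]
    ring
  rw [hrw, MeasureTheory.integral_const_mul, habs_total]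
  -- final computation
  have hgx₀ : p * (1 - stdCDF x₀) = stdPDF x₀ := by
    have := hx₀
    simp only [hgdef] at this
    linarith
  have hval : p * (Real.exp (-(p ^ 2) / 2) * (2 * h x₀))
      = 2 * c * Real.exp (-(x₀ - p) ^ 2 / 2) := by
    simp only [hhdef]
    rw [show p * (Real.exp (-(p ^ 2) / 2) * (2 * ((1 - stdCDF x₀) * Real.exp (p * x₀))))
      = 2 * (p * (1 - stdCDF x₀)) * (Real.exp (-(p ^ 2) / 2) * Real.exp (p * x₀)) by ring]
    rw [hgx₀, stdPDF, hc]
    rw [show -(x₀ - p) ^ 2 / 2 = -(x₀ ^ 2) / 2 + (-(p ^ 2) / 2 + p * x₀) by ring,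
      Real.exp_add, ← Real.exp_add]
    ring
  rw [hval]
  have hsq : (2:ℝ) ≤ Real.sqrt (2 * Real.pi) := by
    have h4 : (2:ℝ) = Real.sqrt 4 := by
      rw [show (4:ℝ) = 2 ^ 2 by norm_num, Real.sqrt_sq (by norm_num : (0:ℝ) ≤ 2)]
    rw [h4]
    apply Real.sqrt_le_sqrt
    nlinarith [Real.pi_gt_three]
  have hc2 : 2 * c ≤ 1 := by
    rw [hc]
    calc 2 * (Real.sqrt (2 * Real.pi))⁻¹
        ≤ Real.sqrt (2 * Real.pi) * (Real.sqrt (2 * Real.pi))⁻¹ :=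
          mul_le_mul_of_nonneg_right hsq (by positivity)
      _ = 1 := mul_inv_cancel₀ (by positivity)
  have hexp_le : Real.exp (-(x₀ - p) ^ 2 / 2) ≤ 1 := by
    rw [Real.exp_le_one_iff]
    nlinarith [sq_nonneg (x₀ - p)]
  calc 2 * c * Real.exp (-(x₀ - p) ^ 2 / 2) ≤ 2 * c * 1 := by
        refine mul_le_mul_of_nonneg_left hexp_le ?_
        positivity
    _ = 2 * c := mul_one _
    _ ≤ 1 := hc2

end Stmt7Aux

/-- Uniform-in-π bound: ∃ C, ∀ π > 0, π·E[|π·τ̂(ξ) − 1|] ≤ C for ξ ~ N(π,1). -/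
theorem stmt7 :
    ∃ C : ℝ, ∀ π : ℝ, 0 < π →
      π * ∫ x, |π * millsTau 1 x - 1| ∂(gaussianReal π 1) ≤ C := by
  exact ⟨1, Stmt7Aux.main⟩
end

section
/- Let ξ be a random variable whose family of distributions {P_μ : μ ∈ M} has common support, let θ(μ) ∈ Θ ⊆ ℝ, and let θ̂(ξ) be unbiased for θ(μ). Let U be independent of ξ with distribution not depending on μ, and let θ̃(ξ, U) be unbiased with E[θ̃(ξ,U) | ξ] = θ̂(ξ). If E_μ|θ̃(ξ,U) − θ(μ)| = E_μ|θ̂(ξ) − θ(μ)| for all μ ∈ M, then θ̃(ξ, U) = θ̂(ξ) almost surely on the event {θ̂(ξ) ∈ Θ}. -/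
open MeasureTheory

private lemma pin_of_ae_le {Ω : Type*} [MeasurableSpace Ω] (Q : Measure Ω)
    [IsProbabilityMeasure Q] {g : Ω → ℝ} {t : ℝ} (hint : Integrable g Q)
    (hmean : ∫ u, g u ∂Q = t) (hle : ∀ᵐ u ∂Q, g u ≤ t) :
    ∀ᵐ u ∂Q, g u = t := by
  have h0 : Integrable (fun u => t - g u) Q := (integrable_const t).sub hint
  have hnn : 0 ≤ᵐ[Q] fun u => t - g u := hle.mono fun u h => sub_nonneg.mpr h
  have hI : ∫ u, (t - g u) ∂Q = 0 := by
    rw [integral_sub (integrable_const t) hint, integral_const, hmean]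
    simp
  have h2 := (integral_eq_zero_iff_of_nonneg_ae hnn h0).mp hI
  filter_upwards [h2] with u hu
  have hu' : t - g u = 0 := hu
  linarith

private lemma pin_of_ae_ge {Ω : Type*} [MeasurableSpace Ω] (Q : Measure Ω)
    [IsProbabilityMeasure Q] {g : Ω → ℝ} {t : ℝ} (hint : Integrable g Q)
    (hmean : ∫ u, g u ∂Q = t) (hge : ∀ᵐ u ∂Q, t ≤ g u) :
    ∀ᵐ u ∂Q, g u = t := by
  have h := pin_of_ae_le Q (g := fun u => -g u) (t := -t) hint.neg
    (by rw [integral_neg, hmean]) (hge.mono fun u h => by simpa using h)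
  filter_upwards [h] with u hu
  have hu' : -g u = -t := hu
  linarith

private lemma sign_dichotomy {Ω : Type*} [MeasurableSpace Ω] (Q : Measure Ω)
    [IsProbabilityMeasure Q] {h : Ω → ℝ} (hint : Integrable h Q)
    (heq : ∫ u, |h u| ∂Q = |∫ u, h u ∂Q|) :
    (∀ᵐ u ∂Q, 0 ≤ h u) ∨ (∀ᵐ u ∂Q, h u ≤ 0) := by
  have habs : Integrable (fun u => |h u|) Q := hint.abs
  rcases le_or_gt 0 (∫ u, h u ∂Q) with hI | hI
  · left
    have hE : ∫ u, (|h u| - h u) ∂Q = 0 := by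
      rw [integral_sub habs hint, heq, abs_of_nonneg hI, sub_self]
    have hnn : 0 ≤ᵐ[Q] fun u => |h u| - h u :=
      Filter.Eventually.of_forall fun u => sub_nonneg.mpr (le_abs_self _)
    have h2 := (integral_eq_zero_iff_of_nonneg_ae hnn (habs.sub hint)).mp hE
    filter_upwards [h2] with u hu
    have hu' : |h u| - h u = 0 := hu
    have := abs_nonneg (h u)
    linarith
  · right
    have hE : ∫ u, (|h u| + h u) ∂Q = 0 := by
      rw [integral_add habs hint, heq, abs_of_neg hI]
      ring
    have hnn : 0 ≤ᵐ[Q] fun u => |h u| + h u :=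
      Filter.Eventually.of_forall fun u => by
        simp only [Pi.zero_apply]
        have := neg_abs_le (h u); linarith
    have h2 := (integral_eq_zero_iff_of_nonneg_ae hnn (habs.add hint)).mp hE
    filter_upwards [h2] with u hu
    have hu' : |h u| + h u = 0 := hu
    have := abs_nonneg (h u)
    linarith

private lemma pin_of_dense {Ω : Type*} [MeasurableSpace Ω] (Q : Measure Ω)
    [IsProbabilityMeasure Q] {g : Ω → ℝ} {t : ℝ} {c : Set ℝ}
    (hint : Integrable g Q) (hmean : ∫ u, g u ∂Q = t)
    (hd : ∀ d ∈ c, (∀ᵐ u ∂Q, d ≤ g u) ∨ (∀ᵐ u ∂Q, g u ≤ d))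
    (ht : t ∈ closure c) : ∀ᵐ u ∂Q, g u = t := by
  by_contra hcon
  rw [ae_iff] at hcon
  have hgt : Q {u | t < g u} ≠ 0 := by
    intro h0
    have hle : ∀ᵐ u ∂Q, g u ≤ t := by
      rw [ae_iff]; simpa only [not_le] using h0
    exact hcon (ae_iff.mp (pin_of_ae_le Q hint hmean hle))
  have hlt : Q {u | g u < t} ≠ 0 := by
    intro h0
    have hge : ∀ᵐ u ∂Q, t ≤ g u := by
      rw [ae_iff]; simpa only [not_le] using h0
    exact hcon (ae_iff.mp (pin_of_ae_ge Q hint hmean hge))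
  obtain ⟨n, hn⟩ : ∃ n : ℕ, Q {u | t + 1/((n:ℝ)+1) ≤ g u} ≠ 0 := by
    by_contra hall
    push_neg at hall
    refine hgt (measure_mono_null ?_ (measure_iUnion_null hall))
    intro u hu
    have hu' : t < g u := hu
    obtain ⟨k, hk⟩ := exists_nat_one_div_lt (sub_pos.mpr hu')
    exact Set.mem_iUnion.mpr ⟨k, by simp only [Set.mem_setOf_eq]; linarith⟩
  obtain ⟨m, hm⟩ : ∃ m : ℕ, Q {u | g u ≤ t - 1/((m:ℝ)+1)} ≠ 0 := by
    by_contra hall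
    push_neg at hall
    refine hlt (measure_mono_null ?_ (measure_iUnion_null hall))
    intro u hu
    have hu' : g u < t := hu
    obtain ⟨k, hk⟩ := exists_nat_one_div_lt (sub_pos.mpr hu')
    exact Set.mem_iUnion.mpr ⟨k, by simp only [Set.mem_setOf_eq]; linarith⟩
  have hεpos : (0:ℝ) < min (1/((n:ℝ)+1)) (1/((m:ℝ)+1)) := by positivity
  obtain ⟨d, hdc, hdd⟩ := Metric.mem_closure_iff.mp ht _ hεpos
  rw [Real.dist_eq] at hdd
  have habs := abs_lt.mp hdd
  rcases hd d hdc with h | h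
  · apply hm
    refine measure_mono_null ?_ (ae_iff.mp h)
    intro u hu
    have hu' : g u ≤ t - 1/((m:ℝ)+1) := hu
    have h2 : min (1/((n:ℝ)+1)) (1/((m:ℝ)+1)) ≤ 1/((m:ℝ)+1) := min_le_right _ _
    simp only [Set.mem_setOf_eq, not_le]
    linarith [habs.2]
  · apply hn
    refine measure_mono_null ?_ (ae_iff.mp h)
    intro u hu
    have hu' : t + 1/((n:ℝ)+1) ≤ g u := hu
    have h2 : min (1/((n:ℝ)+1)) (1/((m:ℝ)+1)) ≤ 1/((n:ℝ)+1) := min_le_left _ _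
    simp only [Set.mem_setOf_eq, not_le]
    linarith [habs.1]

/-- Uniqueness of the minimum-risk unbiased estimator under absolute value loss:
if a randomized unbiased estimator θ̃(ξ,U) Rao–Blackwellizes to θ̂(ξ) and has the
same absolute-deviation risk, then θ̃(ξ,U) = θ̂(ξ) a.s. on the event θ̂(ξ) ∈ Θ. -/
theorem stmt19 {X 𝒰 M : Type*} [MeasurableSpace X] [MeasurableSpace 𝒰]
    (P : M → Measure X) (hprob : ∀ μ, IsProbabilityMeasure (P μ))
    (hsupp : ∀ μ ν, P μ ≪ P ν)
    (θ : M → ℝ)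
    (Q : Measure 𝒰) [IsProbabilityMeasure Q]
    (θhat : X → ℝ) (hθhat : Measurable θhat)
    (θtilde : X × 𝒰 → ℝ) (hθtilde : Measurable θtilde)
    (hunb : ∀ μ, Integrable θhat (P μ) ∧ ∫ x, θhat x ∂(P μ) = θ μ)
    (hunb' : ∀ μ, Integrable θtilde ((P μ).prod Q) ∧
        ∫ y, θtilde y ∂((P μ).prod Q) = θ μ)
    (hcond : ∀ μ, ∀ᵐ x ∂(P μ), ∫ u, θtilde (x, u) ∂Q = θhat x)
    (hrisk : ∀ μ, ∫ y, |θtilde y - θ μ| ∂((P μ).prod Q)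
        = ∫ x, |θhat x - θ μ| ∂(P μ)) :
    ∀ μ, ∀ᵐ y ∂((P μ).prod Q), θhat y.1 ∈ Set.range θ → θtilde y = θhat y.1 := by
  intro μ
  haveI := hprob μ
  -- Step B: sign dichotomy at each parameter value, transferred to P μ
  have key : ∀ ν : M, ∀ᵐ x ∂(P μ),
      (∀ᵐ u ∂Q, θ ν ≤ θtilde (x, u)) ∨ (∀ᵐ u ∂Q, θtilde (x, u) ≤ θ ν) := by
    intro ν
    haveI := hprob ν
    set t := θ ν with ht
    have hint0 : Integrable θtilde ((P ν).prod Q) := (hunb' ν).1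
    have hsec0 : ∀ᵐ x ∂(P ν), Integrable (fun u => θtilde (x, u)) Q :=
      hint0.prod_right_ae
    have hint : Integrable (fun y => θtilde y - t) ((P ν).prod Q) :=
      hint0.sub (integrable_const t)
    have habs : Integrable (fun y => |θtilde y - t|) ((P ν).prod Q) := hint.abs
    have hG : Integrable (fun x => |θhat x - t|) (P ν) :=
      ((hunb ν).1.sub (integrable_const t)).abs
    have hF : Integrable (fun x => ∫ u, |θtilde (x, u) - t| ∂Q) (P ν) :=
      habs.integral_prod_left
    have hle : ∀ᵐ x ∂(P ν), |θhat x - t| ≤ ∫ u, |θtilde (x, u) - t| ∂Q := by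
      filter_upwards [hsec0, hcond ν] with x hx hcx
      have h1 : ∫ u, (θtilde (x, u) - t) ∂Q = θhat x - t := by
        rw [integral_sub hx (integrable_const t), integral_const, hcx]
        simp
      calc |θhat x - t| = |∫ u, (θtilde (x, u) - t) ∂Q| := by rw [h1]
        _ ≤ ∫ u, |θtilde (x, u) - t| ∂Q := by
            simpa [Real.norm_eq_abs] using
              norm_integral_le_integral_norm (μ := Q) (fun u => θtilde (x, u) - t)
    have hzero : ∫ x, ((∫ u, |θtilde (x, u) - t| ∂Q) - |θhat x - t|) ∂(P ν) = 0 := by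
      rw [integral_sub hF hG]
      have hr := hrisk ν
      rw [integral_prod _ habs] at hr
      rw [hr]
      ring
    have hFG := (integral_eq_zero_iff_of_nonneg_ae
      (hle.mono fun x h => sub_nonneg.mpr h) (hF.sub hG)).mp hzero
    have hdich : ∀ᵐ x ∂(P ν),
        (∀ᵐ u ∂Q, t ≤ θtilde (x, u)) ∨ (∀ᵐ u ∂Q, θtilde (x, u) ≤ t) := by
      filter_upwards [hFG, hsec0, hcond ν] with x hx hix hcx
      have hx' : (∫ u, |θtilde (x, u) - t| ∂Q) - |θhat x - t| = 0 := hx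
      have h1 : ∫ u, (θtilde (x, u) - t) ∂Q = θhat x - t := by
        rw [integral_sub hix (integrable_const t), integral_const, hcx]
        simp
      have hix' : Integrable (fun u => θtilde (x, u) - t) Q :=
        hix.sub (integrable_const t)
      have hsd := sign_dichotomy Q hix' (by rw [h1]; linarith)
      rcases hsd with h | h
      · exact Or.inl (h.mono fun u hu => by simpa [sub_nonneg] using hu)
      · exact Or.inr (h.mono fun u hu => by simpa [sub_nonpos] using hu)
    exact (hsupp μ ν).ae_le hdich
  -- Step A: countable dense subset of the range of θ
  obtain ⟨c, hc_sub, hc_count, hc_dense⟩ :=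
    (TopologicalSpace.IsSeparable.of_separableSpace
      (Set.range θ)).exists_countable_dense_subset
  -- Step C: combine countably many dichotomies with conditional-mean facts
  have hx : ∀ᵐ x ∂(P μ),
      (∀ d ∈ c, (∀ᵐ u ∂Q, d ≤ θtilde (x, u)) ∨ (∀ᵐ u ∂Q, θtilde (x, u) ≤ d)) ∧
      Integrable (fun u => θtilde (x, u)) Q ∧ ∫ u, θtilde (x, u) ∂Q = θhat x := by
    refine ((ae_ball_iff hc_count).mpr ?_).and
      ((hunb' μ).1.prod_right_ae.and (hcond μ))
    intro d hd
    obtain ⟨ν, hν⟩ := hc_sub hd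
    simpa [hν] using key ν
  -- Step D: the pointwise pinning statement
  have hgood : ∀ᵐ x ∂(P μ),
      θhat x ∈ Set.range θ → Q {u | ¬ θtilde (x, u) = θhat x} = 0 := by
    filter_upwards [hx] with x hx hmem
    obtain ⟨hdich, hint, hmean⟩ := hx
    exact ae_iff.mp (pin_of_dense Q hint hmean hdich (hc_dense hmem))
  -- Step E: pass to the product measure
  obtain ⟨N, hNsub, hNmeas, hNnull⟩ :=
    exists_measurable_superset_of_null (ae_iff.mp hgood)
  have hWmeas : MeasurableSet {y : X × 𝒰 | ¬ θtilde y = θhat y.1} :=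
    (measurableSet_eq_fun hθtilde (hθhat.comp measurable_fst)).compl
  set Z : Set X := {x | Q {u | ¬ θtilde (x, u) = θhat x} = 0} with hZdef
  have hZmeas : MeasurableSet Z := by
    have hmeas : Measurable fun x => Q (Prod.mk x ⁻¹' {y : X × 𝒰 | ¬ θtilde y = θhat y.1}) :=
      _root_.measurable_measure_prodMk_left hWmeas
    have : Z = (fun x => Q (Prod.mk x ⁻¹' {y : X × 𝒰 | ¬ θtilde y = θhat y.1})) ⁻¹' {0} := by
      ext x; simp [hZdef, Set.preimage, Set.mem_setOf_eq]
    rw [this]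
    exact hmeas (measurableSet_singleton 0)
  set V : Set (X × 𝒰) := {y | ¬ θtilde y = θhat y.1} ∩ (Z ×ˢ Set.univ) with hVdef
  have hVmeas : MeasurableSet V := hWmeas.inter (hZmeas.prod MeasurableSet.univ)
  have hVnull : ((P μ).prod Q) V = 0 := by
    rw [Measure.prod_apply hVmeas]
    have hsec : ∀ x, Q (Prod.mk x ⁻¹' V) = 0 := by
      intro x
      by_cases hxZ : x ∈ Z
      · refine measure_mono_null ?_ hxZ
        intro u hu
        exact hu.1
      · have : Prod.mk x ⁻¹' V = ∅ := by
          ext u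
          simp only [hVdef, Set.mem_preimage, Set.mem_inter_iff, Set.mem_prod,
            Set.mem_univ, and_true, Set.mem_empty_iff_false, iff_false, not_and,
            Set.mem_setOf_eq]
          intro _ h; exact hxZ h
        rw [this, measure_empty]
    simp only [hsec, lintegral_zero]
  rw [ae_iff]
  have hsub : {y : X × 𝒰 | ¬ (θhat y.1 ∈ Set.range θ → θtilde y = θhat y.1)} ⊆
      (N ×ˢ Set.univ) ∪ V := by
    intro y hy
    simp only [Set.mem_setOf_eq, _root_.not_imp] at hy
    by_cases hyN : y.1 ∈ N
    · exact Or.inl ⟨hyN, Set.mem_univ _⟩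
    · refine Or.inr ⟨hy.2, ?_, Set.mem_univ _⟩
      have : y.1 ∉ {x | ¬ (θhat x ∈ Set.range θ → Q {u | ¬ θtilde (x, u) = θhat x} = 0)} :=
        fun h => hyN (hNsub h)
      simp only [Set.mem_setOf_eq, not_not] at this
      exact this hy.1
  refine le_antisymm ?_ zero_le
  calc ((P μ).prod Q) {y : X × 𝒰 | ¬ (θhat y.1 ∈ Set.range θ → θtilde y = θhat y.1)}
      ≤ ((P μ).prod Q) ((N ×ˢ Set.univ) ∪ V) := measure_mono hsub
    _ ≤ ((P μ).prod Q) (N ×ˢ Set.univ) + ((P μ).prod Q) V := measure_union_le _ _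
    _ = 0 := by rw [hVnull, Measure.prod_prod, hNnull, zero_mul, add_zero]
end
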